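/- Let E be a real normed space, h : E → ℝ, x : ℝ → E a trajectory, r : ℝ → ℝ differentiable, γ : ℝ → ℝ Lipschitz with γ(0) = 0, and T > 0. Suppose: (a) the map t ↦ h(x(t)) is differentiable on [0, T]; (b) h(x(0)) + r(0) ≥ 0; (c) r(T) = 0; and (d) for every t ∈ [0, T], (d/dt)[h(x(t))] + r'(t) ≥ -γ(h(x(t)) + r(t)). Then h(x(t)) + r(t) ≥ 0 for every t ∈ [0, T]; in particular the trajectory stays in the constricting tube C̃(t) = {y : h(y) + r(t) ≥ 0} for all t ∈ [0, T], and h(x(T)) ≥ 0, i.e. x(T) lies in the target set C = {y : h(y) ≥ 0} at the prescribed time T (Theorem 1(i)). -/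

import Mathlib

/-- **Theorem 1(i): prescribed-time recovery via tube invariance.**
If `h ∘ x` is differentiable on `[0, T]` (with derivative `hx'`), the schedule `r`
is differentiable (with derivative `r'`), `γ` is Lipschitz with `γ 0 = 0`,
`h (x 0) + r 0 ≥ 0`, `r T = 0`, and the constricting CBF inequality
`(d/dt)[h (x t)] + r' t ≥ -γ (h (x t) + r t)` holds on `[0, T]`, then the trajectory
stays in the constricting tube on `[0, T]` and `h (x T) ≥ 0`. -/
theorem prescribed_time_recovery
    {E : Type*} [NormedAddCommGroup E] [NormedSpace ℝ E]
    (h : E → ℝ) (x : ℝ → E) (r r' : ℝ → ℝ) (hx' : ℝ → ℝ)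
    (γ : ℝ → ℝ) (K : NNReal) (hγ : LipschitzWith K γ) (hγ0 : γ 0 = 0)
    (T : ℝ) (hT : 0 < T)
    (hder : ∀ t ∈ Set.Icc (0 : ℝ) T, HasDerivAt (fun s => h (x s)) (hx' t) t)
    (hrder : ∀ t : ℝ, HasDerivAt r (r' t) t)
    (hinit : h (x 0) + r 0 ≥ 0)
    (hrT : r T = 0)
    (hcbf : ∀ t ∈ Set.Icc (0 : ℝ) T, hx' t + r' t ≥ -γ (h (x t) + r t)) :
    (∀ t ∈ Set.Icc (0 : ℝ) T, x t ∈ {y : E | h y + r t ≥ 0}) ∧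
      x T ∈ {y : E | h y ≥ 0} := by
  set v : ℝ → ℝ := fun t => h (x t) + r t with hv
  have hvder : ∀ t ∈ Set.Icc (0 : ℝ) T, HasDerivAt v (hx' t + r' t) t := fun t ht =>
    (hder t ht).add (hrder t)
  have key : ∀ t ∈ Set.Icc (0 : ℝ) T, 0 ≤ v t := by
    intro t₁ ht₁
    by_contra hneg
    push_neg at hneg
    set s : Set ℝ := {t | t ∈ Set.Icc (0 : ℝ) t₁ ∧ 0 ≤ v t} with hs
    have h0s : (0 : ℝ) ∈ s := ⟨⟨le_refl 0, ht₁.1⟩, hinit⟩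
    have hbdd : BddAbove s := ⟨t₁, fun t ht => ht.1.2⟩
    have hne : s.Nonempty := ⟨0, h0s⟩
    set t₀ : ℝ := sSup s with ht₀def
    have ht₀0 : 0 ≤ t₀ := le_csSup hbdd h0s
    have ht₀t₁ : t₀ ≤ t₁ := csSup_le hne fun t ht => ht.1.2
    have ht₀Icc : t₀ ∈ Set.Icc (0 : ℝ) T := ⟨ht₀0, ht₀t₁.trans ht₁.2⟩
    have ht₀cl : t₀ ∈ closure s := csSup_mem_closure hne hbdd
    have hv₀ : 0 ≤ v t₀ := by
      have hcw : ContinuousWithinAt v s t₀ :=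
        ((hvder t₀ ht₀Icc).continuousAt).continuousWithinAt
      have hnb : (nhdsWithin t₀ s).NeBot := mem_closure_iff_nhdsWithin_neBot.1 ht₀cl
      exact ge_of_tendsto hcw (Filter.eventually_inf_principal.2
        (Filter.Eventually.of_forall fun t ht => ht.2))
    have ht₀lt : t₀ < t₁ := lt_of_le_of_ne ht₀t₁ fun heq =>
      absurd hv₀ (by rw [heq]; exact not_le.2 hneg)
    have hIoosub : Set.Ioo t₀ t₁ ⊆ Set.Icc (0 : ℝ) T := fun t ht =>
      ⟨ht₀0.trans ht.1.le, ht.2.le.trans ht₁.2⟩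
    have hvneg : ∀ t ∈ Set.Ioo t₀ t₁, v t < 0 := by
      intro t ht
      by_contra hge
      push_neg at hge
      have : t ∈ s := ⟨⟨ht₀0.trans ht.1.le, ht.2.le⟩, hge⟩
      exact absurd (le_csSup hbdd this) (not_le.2 ht.1)
    -- g t = v t * exp (-K t) is monotone on [t₀, t₁]
    set g : ℝ → ℝ := fun t => v t * Real.exp (-(K : ℝ) * t) with hg
    have hgder : ∀ t ∈ Set.Icc (0 : ℝ) T,
        HasDerivAt g ((hx' t + r' t - (K : ℝ) * v t) * Real.exp (-(K : ℝ) * t)) t := by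
      intro t ht
      have he : HasDerivAt (fun u => Real.exp (-(K : ℝ) * u))
          (Real.exp (-(K : ℝ) * t) * (-(K : ℝ) * 1)) t :=
        ((hasDerivAt_id t).const_mul (-(K : ℝ))).exp
      have := (hvder t ht).mul he
      exact this.congr_deriv (by ring)
    have hmono : MonotoneOn g (Set.Icc t₀ t₁) := by
      apply monotoneOn_of_hasDerivWithinAt_nonneg (f' := fun t =>
        (hx' t + r' t - (K : ℝ) * v t) * Real.exp (-(K : ℝ) * t)) (convex_Icc t₀ t₁)
      · intro t ht
        exact ((hgder t ⟨ht₀0.trans ht.1, ht.2.trans ht₁.2⟩).continuousAt).continuousWithinAt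
      · intro t ht
        rw [interior_Icc] at ht
        exact ((hgder t (hIoosub ht)).hasDerivWithinAt)
      · intro t ht
        rw [interior_Icc] at ht
        have hvt : v t < 0 := hvneg t ht
        have hγle : γ (v t) ≤ -((K : ℝ) * v t) := by
          have := hγ.dist_le_mul (v t) 0
          rw [hγ0, dist_zero_right, dist_zero_right, Real.norm_eq_abs,
            Real.norm_eq_abs, abs_of_neg hvt] at this
          calc γ (v t) ≤ |γ (v t)| := le_abs_self _
            _ ≤ (K : ℝ) * (-(v t)) := this
            _ = -((K : ℝ) * v t) := by ring
        have hcbf' := hcbf t (hIoosub ht)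
        have : 0 ≤ hx' t + r' t - (K : ℝ) * v t := by
          have : -γ (v t) ≥ -(-((K : ℝ) * v t)) := neg_le_neg hγle
          linarith [hcbf', this]
        positivity
    have hle : g t₀ ≤ g t₁ :=
      hmono ⟨le_refl _, ht₀lt.le⟩ ⟨ht₀lt.le, le_refl _⟩ ht₀lt.le
    have hgt₀ : 0 ≤ g t₀ := mul_nonneg hv₀ (Real.exp_pos _).le
    have hgt₁ : g t₁ < 0 :=
      mul_neg_of_neg_of_pos hneg (Real.exp_pos _)
    linarith
  refine ⟨fun t ht => key t ht, ?_⟩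
  have := key T ⟨hT.le, le_refl T⟩
  simp only [hv, hrT, add_zero] at this
  exact this
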